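/- Let I admit a final idempotent with apex i, and let h : I ⥤ J be a final (cofinal) functor. Then J admits a final idempotent with apex h(i). -/
import Mathlib


open CategoryTheory CategoryTheory.Limits

lemma stmt17_aux {I : Type u₁} [Category.{v₁} I] {J : Type u₂} [Category.{v₂} J]
    (i : I) (σ : 𝟭 I ⟶ (Functor.const I).obj i) (h : I ⥤ J) [h.Final]
    (j : J) {k : I} (f : j ⟶ h.obj k) :
    f ≫ h.map (σ.app k) =
      Functor.Final.homToLift h j ≫ h.map (σ.app (Functor.Final.lift h j)) := by
  have key : ∀ (X₁ X₂ : I) (k₁ : j ⟶ h.obj X₁) (k₂ : j ⟶ h.obj X₂) (g : X₁ ⟶ X₂),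
      k₁ ≫ h.map g = k₂ → k₁ ≫ h.map (σ.app X₁) = k₂ ≫ h.map (σ.app X₂) := by
    intro X₁ X₂ k₁ k₂ g hg
    have := σ.naturality g
    simp only [Functor.id_map, Functor.const_obj_obj, Functor.const_obj_map,
      Category.comp_id] at this
    rw [← hg, Category.assoc, ← h.map_comp, this]
  exact Functor.Final.induction h
    (Z := fun X (kk : j ⟶ h.obj X) =>
      f ≫ h.map (σ.app k) = kk ≫ h.map (σ.app X))
    (fun X₁ X₂ k₁ k₂ g hg prev => prev.trans (key X₁ X₂ k₁ k₂ g hg))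
    (fun X₁ X₂ k₁ k₂ g hg prev => prev.trans (key X₁ X₂ k₁ k₂ g hg).symm)
    (X₀ := k) (k₀ := f) rfl

/-- If `I` admits a final idempotent with apex `i` (a natural transformation
`id_I ⟹ const i`) and `h : I ⥤ J` is a final (cofinal) functor, then `J` admits
a final idempotent with apex `h i`. -/
theorem stmt17 {I : Type u₁} [Category.{v₁} I] {J : Type u₂} [Category.{v₂} J]
    (i : I) (σ : 𝟭 I ⟶ (Functor.const I).obj i) (h : I ⥤ J) [h.Final] :
    Nonempty (𝟭 J ⟶ (Functor.const J).obj (h.obj i)) := by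
  refine ⟨⟨fun j => Functor.Final.homToLift h j ≫
      h.map (σ.app (Functor.Final.lift h j)) ≫ h.map (σ.app i), ?_⟩⟩
  intro j j' u
  simp only [Functor.id_map, Functor.const_obj_obj, Functor.const_obj_map, Category.comp_id]
  rw [← Category.assoc, ← Category.assoc, ← Category.assoc,
    ← stmt17_aux i σ h j (u ≫ Functor.Final.homToLift h j')]
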